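/- Reduction of SAT to continuous optimization (weighted): let c_1,…,c_m be Boolean functions on n variables, let w_1,…,w_m be strictly positive real weights, and let F(x) = Σ_{j=1}^m w_j · WFE_{c_j}(x). Then F(x) ≤ Σ_{j=1}^m w_j for all x ∈ [−1,1]^n, and the formula f = c_1 ∧ … ∧ c_m is satisfiable if and only if there exists a ∈ [−1,1]^n with F(a) = Σ_{j=1}^m w_j (i.e., the maximum of F over [−1,1]^n equals Σ_j w_j). -/
import Mathlib


open Finset

/-- Map a Bool vector to a ±1 real vector: `true` (logical True) ↦ -1, `false` ↦ 1. -/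
noncomputable def toPM {n : ℕ} (b : Fin n → Bool) : Fin n → ℝ :=
  fun i => if b i then -1 else 1

/-- Walsh–Fourier coefficient ĝ(S) = 2^{-n} · Σ_{b∈{-1,1}^n} g(b) · ∏_{i∈S} b_i. -/
noncomputable def wfCoeff {n : ℕ} (g : (Fin n → Bool) → ℝ) (S : Finset (Fin n)) : ℝ :=
  (2 ^ n : ℝ)⁻¹ * ∑ b : Fin n → Bool, g b * ∏ i ∈ S, toPM b i

/-- Walsh–Fourier expansion (multilinear extension) of g. -/
noncomputable def WFE {n : ℕ} (g : (Fin n → Bool) → ℝ) (x : Fin n → ℝ) : ℝ :=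
  ∑ S : Finset (Fin n), wfCoeff g S * ∏ i ∈ S, x i

/-- Real {0,1} value of a Boolean function (1 = True). -/
noncomputable def bval {n : ℕ} (c : (Fin n → Bool) → Bool) : (Fin n → Bool) → ℝ :=
  fun b => if c b then 1 else 0

/-- Rounding distribution S_a(b) = ∏_{b_i = -1} (1-a_i)/2 · ∏_{b_i = +1} (1+a_i)/2. -/
noncomputable def roundProb {n : ℕ} (a : Fin n → ℝ) (b : Fin n → Bool) : ℝ :=
  ∏ i, if b i then (1 - a i) / 2 else (1 + a i) / 2

/-- Circuit-output probability COP(P,c). -/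
noncomputable def COP {n : ℕ} (P : Fin n → ℝ) (c : (Fin n → Bool) → Bool) : ℝ :=
  ∑ b : Fin n → Bool, bval c b * ∏ i, (if b i then P i else 1 - P i)

lemma roundProb_eq {n : ℕ} (a : Fin n → ℝ) (b : Fin n → Bool) :
    roundProb a b = (2 ^ n : ℝ)⁻¹ * ∏ i, (1 + toPM b i * a i) := by
  have h1 : roundProb a b = ∏ i, (1 + toPM b i * a i) / 2 := by
    unfold roundProb toPM
    apply Finset.prod_congr rfl
    intro i _
    by_cases h : b i <;> simp [h] <;> ring
  rw [h1, Finset.prod_div_distrib, Finset.prod_const, Finset.card_univ, Fintype.card_fin,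
    div_eq_inv_mul]

lemma WFE_eq_sum {n : ℕ} (g : (Fin n → Bool) → ℝ) (x : Fin n → ℝ) :
    WFE g x = ∑ b, g b * roundProb x b := by
  symm
  calc ∑ b, g b * roundProb x b
      = ∑ b, (2 ^ n : ℝ)⁻¹ * ∑ S : Finset (Fin n), g b * ((∏ i ∈ S, toPM b i) * ∏ i ∈ S, x i) := by
        apply Finset.sum_congr rfl
        intro b _
        rw [roundProb_eq]
        have h := Fintype.prod_add (fun i => toPM b i * x i) (fun _ => (1:ℝ))
        simp only [Finset.prod_const_one, mul_one] at h
        have h2 : ∏ i, (1 + toPM b i * x i) = ∑ S : Finset (Fin n), (∏ i ∈ S, toPM b i) * ∏ i ∈ S, x i := by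
          calc ∏ i, (1 + toPM b i * x i) = ∏ i, (toPM b i * x i + 1) := by
                apply Finset.prod_congr rfl; intros; ring
            _ = ∑ S : Finset (Fin n), ∏ i ∈ S, (toPM b i * x i) := h
            _ = ∑ S : Finset (Fin n), (∏ i ∈ S, toPM b i) * ∏ i ∈ S, x i := by
                simp_rw [Finset.prod_mul_distrib]
        rw [h2, mul_left_comm, Finset.mul_sum]
    _ = ∑ S : Finset (Fin n), ∑ b, (2 ^ n : ℝ)⁻¹ * (g b * ((∏ i ∈ S, toPM b i) * ∏ i ∈ S, x i)) := by
        simp_rw [Finset.mul_sum]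
        rw [Finset.sum_comm]
    _ = WFE g x := by
        unfold WFE wfCoeff
        apply Finset.sum_congr rfl
        intro S _
        rw [mul_assoc, Finset.sum_mul, Finset.mul_sum]
        apply Finset.sum_congr rfl
        intros; ring


lemma roundProb_nonneg {n : ℕ} {a : Fin n → ℝ} (ha : ∀ i, a i ∈ Set.Icc (-1 : ℝ) 1)
    (b : Fin n → Bool) : 0 ≤ roundProb a b := by
  apply Finset.prod_nonneg
  intro i _
  obtain ⟨h1, h2⟩ := ha i
  by_cases h : b i <;> simp [h] <;> linarith

lemma sum_roundProb {n : ℕ} (a : Fin n → ℝ) : ∑ b, roundProb a b = 1 := by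
  unfold roundProb
  rw [← Fintype.prod_sum (fun i (t : Bool) => if t then (1 - a i) / 2 else (1 + a i) / 2)]
  rw [show (1:ℝ) = ∏ i : Fin n, 1 from by simp]
  apply Finset.prod_congr rfl
  intro i _
  simp
  ring

lemma roundProb_toPM {n : ℕ} (b b' : Fin n → Bool) :
    roundProb (toPM b) b' = if b' = b then 1 else 0 := by
  unfold roundProb toPM
  by_cases h : b' = b
  · subst h
    simp only [if_pos rfl]
    rw [show (1:ℝ) = ∏ i : Fin n, 1 from by simp]
    apply Finset.prod_congr rfl
    intro i _
    by_cases hi : b' i <;> simp [hi] <;> norm_num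
  · rw [if_neg h]
    obtain ⟨i, hi⟩ : ∃ i, b' i ≠ b i := by
      by_contra hc
      push_neg at hc
      exact h (funext hc)
    apply Finset.prod_eq_zero (Finset.mem_univ i)
    rcases Bool.eq_false_or_eq_true (b' i) with h1 | h1 <;>
      rcases Bool.eq_false_or_eq_true (b i) with h2 | h2 <;>
      simp [h1, h2] at hi ⊢ <;> norm_num

lemma WFE_toPM {n : ℕ} (g : (Fin n → Bool) → ℝ) (b : Fin n → Bool) :
    WFE g (toPM b) = g b := by
  rw [WFE_eq_sum]
  rw [Finset.sum_eq_single b]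
  · simp [roundProb_toPM]
  · intro b' _ hb'
    simp [roundProb_toPM, hb']
  · intro h
    exact absurd (Finset.mem_univ b) h

lemma WFE_bval_le_one {n : ℕ} (c : (Fin n → Bool) → Bool) {a : Fin n → ℝ}
    (ha : ∀ i, a i ∈ Set.Icc (-1 : ℝ) 1) : WFE (bval c) a ≤ 1 := by
  rw [WFE_eq_sum, ← sum_roundProb a]
  apply Finset.sum_le_sum
  intro b _
  have h0 := roundProb_nonneg ha b
  have : bval c b ≤ 1 := by unfold bval; split <;> norm_num
  nlinarith

/-- Reduction of SAT to continuous optimization (weighted). -/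
theorem sat_iff_max_weighted {n m : ℕ} (c : Fin m → (Fin n → Bool) → Bool)
    (w : Fin m → ℝ) (hw : ∀ j, 0 < w j) :
    (∀ x : Fin n → ℝ, (∀ i, x i ∈ Set.Icc (-1 : ℝ) 1) →
      ∑ j, w j * WFE (bval (c j)) x ≤ ∑ j, w j) ∧
    ((∃ b : Fin n → Bool, ∀ j, c j b = true) ↔
      ∃ a : Fin n → ℝ, (∀ i, a i ∈ Set.Icc (-1 : ℝ) 1) ∧
        ∑ j, w j * WFE (bval (c j)) a = ∑ j, w j) := by
  have hub : ∀ x : Fin n → ℝ, (∀ i, x i ∈ Set.Icc (-1 : ℝ) 1) →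
      ∑ j, w j * WFE (bval (c j)) x ≤ ∑ j, w j := by
    intro x hx
    apply Finset.sum_le_sum
    intro j _
    calc w j * WFE (bval (c j)) x ≤ w j * 1 :=
          mul_le_mul_of_nonneg_left (WFE_bval_le_one (c j) hx) (hw j).le
      _ = w j := mul_one _
  refine ⟨hub, ?_, ?_⟩
  · rintro ⟨b, hb⟩
    refine ⟨toPM b, fun i => ?_, ?_⟩
    · unfold toPM; split <;> constructor <;> norm_num
    · apply Finset.sum_congr rfl
      intro j _
      rw [WFE_toPM]
      unfold bval
      rw [hb j, if_pos rfl, mul_one]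
  · rintro ⟨a, ha, hsum⟩
    have hone : ∀ j, WFE (bval (c j)) a = 1 := by
      intro j
      by_contra hne
      have hlt : WFE (bval (c j)) a < 1 := lt_of_le_of_ne (WFE_bval_le_one (c j) ha) hne
      have : ∑ j', w j' * WFE (bval (c j')) a < ∑ j', w j' := by
        apply Finset.sum_lt_sum
        · intro i _
          calc w i * WFE (bval (c i)) a ≤ w i * 1 :=
                mul_le_mul_of_nonneg_left (WFE_bval_le_one (c i) ha) (hw i).le
            _ = w i := mul_one _
        · exact ⟨j, Finset.mem_univ j, by
            calc w j * WFE (bval (c j)) a < w j * 1 := by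
                  exact mul_lt_mul_of_pos_left hlt (hw j)
              _ = w j := mul_one _⟩
      linarith
    obtain ⟨b, -, hb⟩ : ∃ b ∈ Finset.univ, roundProb a b ≠ 0 := by
      apply Finset.exists_ne_zero_of_sum_ne_zero
      rw [sum_roundProb]; norm_num
    refine ⟨b, fun j => ?_⟩
    have h1 := hone j
    rw [WFE_eq_sum] at h1
    have hz : ∑ b', (1 - bval (c j) b') * roundProb a b' = 0 := by
      have := sum_roundProb a
      simp_rw [sub_mul, one_mul, Finset.sum_sub_distrib, this, h1]
      ring
    have hall := (Finset.sum_eq_zero_iff_of_nonneg (fun b' _ => by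
      have h0 := roundProb_nonneg ha b'
      have : bval (c j) b' ≤ 1 := by unfold bval; split <;> norm_num
      nlinarith)).mp hz b (Finset.mem_univ b)
    by_contra hc
    have : bval (c j) b = 0 := by
      unfold bval; rw [if_neg (by simpa using hc)]
    rw [this] at hall
    simp at hall
    exact hb hall
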